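/- There exists a constant c > 0 (namely one may take any c < (log 2)/(4 log(1+√2)) ≈ 0.1966) such that for every ε > 0 there is N₀ with the property that for all N ≥ N₀, the number of integers m with 1 ≤ m ≤ N for which there exists a finite tree T with i(T) = m is at least N^{(log 2)/(4 log(1+√2)) − ε}. Equivalently, the lower growth exponent liminf_{N→∞} log|I_tree ∩ {1,…,N}| / log N of the set I_tree is at least (log 2)/(4 log(1+√2)). -/

import Mathlib

/-- The number of independent sets of a simple graph `G`
(including the empty set). -/
noncomputable def numIndep {V : Type*} (G : SimpleGraph V) : ℕ :=
  Nat.card {s : Set V // ∀ x ∈ s, ∀ y ∈ s, ¬ G.Adj x y}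

/-- The set of positive integers realizable as the number of independent
sets of a (finite) tree. -/
def Itree : Set ℕ :=
  {m | ∃ (n : ℕ) (T : SimpleGraph (Fin n)), T.IsTree ∧ numIndep T = m}

namespace ItreeProof
open SimpleGraph


def stB : List Bool → ℕ × ℕ
  | [] => (2, 1)
  | b :: t => ((if b then 2 else 1) * ((stB t).1 + (stB t).2), (stB t).1)

lemma stB_pos (l : List Bool) : 1 ≤ (stB l).2 ∧ 1 ≤ (stB l).1 := by
  induction l with
  | nil => norm_num [stB]
  | cons b t ih =>
    simp only [stB]
    rcases b with _|_ <;> simp <;> omega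

lemma stB_lt (l : List Bool) : (stB l).2 < (stB l).1 := by
  induction l with
  | nil => norm_num [stB]
  | cons b t ih =>
    have h2 := stB_pos t
    simp only [stB]
    rcases b with _|_ <;> simp <;> omega

lemma stB_bound (l : List Bool) : (stB l).1 ≤ 2 * 4 ^ l.length := by
  induction l with
  | nil => norm_num [stB]
  | cons b t ih =>
    have h := stB_lt t
    simp only [stB, List.length_cons, pow_succ]
    rcases b with _|_ <;> simp <;> omega

lemma stB_inj : ∀ l l' : List Bool, l.length = l'.length → stB l = stB l' → l = l' := by
  intro l
  induction l with
  | nil => intro l' h _; exact (List.length_eq_zero_iff.mp h.symm).symm ▸ rfl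
  | cons b t ih =>
    intro l' hlen heq
    cases l' with
    | nil => simp at hlen
    | cons b' t' =>
      have hq := stB_pos t
      have hq' := stB_pos t'
      have hp := stB_lt t
      have hp' := stB_lt t'
      simp only [stB, Prod.mk.injEq] at heq
      obtain ⟨h1, h2⟩ := heq
      have hb : b = b' := by
        rcases b with _|_ <;> rcases b' with _|_ <;> simp_all <;> omega
      subst hb
      have ht : stB t = stB t' := by
        have : (stB t).1 + (stB t).2 = (stB t').1 + (stB t').2 := by
          rcases b with _|_ <;> simp_all <;> omega
        exact Prod.ext h2 (by omega)
      simp only [List.length_cons, Nat.succ_inj] at hlen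
      rw [ih t' hlen ht]

def val (l : List Bool) : ℕ := 2 ^ (2 * l.length + 2) * (stB l).1 + (stB l).2

lemma two_pow_helper (k : ℕ) : 2 * 4 ^ k < 2 ^ (2 * k + 2) := by
  have h4 : (4:ℕ) ^ k = 2 ^ (2 * k) := by
    rw [show (4:ℕ) = 2^2 by norm_num, ← pow_mul, mul_comm]
  rw [h4, pow_succ, pow_succ]
  have : 1 ≤ 2 ^ (2*k) := Nat.one_le_two_pow
  omega

lemma val_inj (l l' : List Bool) (hlen : l.length = l'.length) (h : val l = val l') :
    l = l' := by
  have hq1 : (stB l).2 < 2 ^ (2 * l.length + 2) :=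
    lt_of_le_of_lt ((stB_lt l).le.trans (stB_bound l)) (two_pow_helper _)
  have hq2 : (stB l').2 < 2 ^ (2 * l.length + 2) := by
    rw [hlen]
    exact lt_of_le_of_lt ((stB_lt l').le.trans (stB_bound l')) (two_pow_helper _)
  unfold val at h
  rw [← hlen] at h
  set M := 2 ^ (2 * l.length + 2) with hM
  have hMpos : 0 < M := Nat.pow_pos (by norm_num)
  have h1 : (stB l).1 = (stB l').1 := by
    have e1 : (M * (stB l).1 + (stB l).2) / M = (stB l).1 := by
      rw [Nat.mul_add_div hMpos, Nat.div_eq_of_lt hq1, add_zero]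
    have e2 : (M * (stB l').1 + (stB l').2) / M = (stB l').1 := by
      rw [Nat.mul_add_div hMpos, Nat.div_eq_of_lt hq2, add_zero]
    rw [← e1, ← e2, h]
  apply stB_inj l l' hlen
  have h2 : (stB l).2 = (stB l').2 := by rw [h1] at h; omega
  exact Prod.ext h1 h2

lemma val_le (l : List Bool) : val l ≤ 2 ^ (4 * l.length + 4) := by
  have b1 := stB_bound l
  have q1 := (stB_lt l).le
  have e0 : 2 * 4 ^ l.length = 2 ^ (2 * l.length + 1) := by
    rw [show (4:ℕ) = 2^2 by norm_num, ← pow_mul, mul_comm 2 l.length, pow_succ,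
      mul_comm l.length 2]
    ring
  unfold val
  calc 2 ^ (2 * l.length + 2) * (stB l).1 + (stB l).2
      ≤ 2 ^ (2 * l.length + 2) * 2 ^ (2*l.length+1) + 2 ^ (2*l.length+1) := by
        rw [← e0]
        exact Nat.add_le_add (Nat.mul_le_mul_left _ b1) (q1.trans b1)
    _ = 2 ^ (4*l.length+3) + 2 ^ (2*l.length+1) := by
        rw [← pow_add]
        congr 1
        ring
    _ ≤ 2 ^ (4 * l.length + 4) := by
        have h1 : 2 ^ (2*l.length+1) ≤ 2 ^ (4*l.length+3) :=
          Nat.pow_le_pow_right (by norm_num) (by omega)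
        have h2 : 2 ^ (4*l.length+4) = 2 ^ (4*l.length+3) * 2 := by rw [pow_succ]
        omega

lemma one_le_val (l : List Bool) : 1 ≤ val l := by
  have := stB_pos l
  unfold val; omega


def IndepP {V : Type*} (G : SimpleGraph V) (s : Set V) : Prop :=
  ∀ x ∈ s, ∀ y ∈ s, ¬ G.Adj x y

noncomputable def Pc {V : Type*} (G : SimpleGraph V) (r : V) : ℕ :=
  Nat.card {s : Set V // IndepP G s ∧ r ∉ s}

noncomputable def Qc {V : Type*} (G : SimpleGraph V) (r : V) : ℕ :=
  Nat.card {s : Set V // IndepP G s ∧ r ∈ s}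

lemma numIndep_eq_card {V : Type*} (G : SimpleGraph V) :
    numIndep G = Nat.card {s : Set V // IndepP G s} := rfl

lemma card_split {α : Type*} [Finite α] (P Q : α → Prop) :
    Nat.card {x // P x} = Nat.card {x // P x ∧ Q x} + Nat.card {x // P x ∧ ¬ Q x} := by
  classical
  rw [← Nat.card_sum]
  exact Nat.card_congr (((Equiv.sumCompl (fun x : {x // P x} => Q x.1)).symm).trans
    (Equiv.sumCongr (Equiv.subtypeSubtypeEquivSubtypeInter P Q)
      (Equiv.subtypeSubtypeEquivSubtypeInter P (fun x => ¬ Q x))))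

lemma numIndep_eq {V : Type*} [Finite V] (G : SimpleGraph V) (r : V) :
    numIndep G = Pc G r + Qc G r := by
  rw [numIndep_eq_card, card_split (IndepP G) (fun s => r ∈ s)]
  simp only [Pc, Qc]
  omega

/-- add a pendant vertex (new vertex `Fin.last n`) attached to `a`. -/
def addLeaf {n : ℕ} (G : SimpleGraph (Fin n)) (a : Fin n) : SimpleGraph (Fin (n + 1)) where
  Adj x y := (∃ u v : Fin n, G.Adj u v ∧ u.castSucc = x ∧ v.castSucc = y)
    ∨ (x = Fin.last n ∧ y = a.castSucc) ∨ (x = a.castSucc ∧ y = Fin.last n)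
  symm := by
    constructor
    rintro x y (⟨u, v, h, rfl, rfl⟩ | ⟨rfl, rfl⟩ | ⟨rfl, rfl⟩)
    · exact Or.inl ⟨v, u, h.symm, rfl, rfl⟩
    · exact Or.inr (Or.inr ⟨rfl, rfl⟩)
    · exact Or.inr (Or.inl ⟨rfl, rfl⟩)
  loopless := by
    constructor
    rintro x (⟨u, v, h, rfl, hv⟩ | ⟨rfl, h⟩ | ⟨h, rfl⟩)
    · exact G.loopless.irrefl u ((Fin.castSucc_injective n hv) ▸ h)
    · exact (Fin.castSucc_lt_last a).ne' h
    · exact (Fin.castSucc_lt_last a).ne' h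

variable {n : ℕ} {G : SimpleGraph (Fin n)} {a : Fin n}

lemma addLeaf_adj_cast {u v : Fin n} :
    (addLeaf G a).Adj u.castSucc v.castSucc ↔ G.Adj u v := by
  constructor
  · rintro (⟨u', v', h, hu, hv⟩ | ⟨h, -⟩ | ⟨-, h⟩)
    · rwa [Fin.castSucc_injective n hu, Fin.castSucc_injective n hv] at h
    · exact absurd h (Fin.castSucc_lt_last u).ne
    · exact absurd h (Fin.castSucc_lt_last v).ne
  · intro h
    exact Or.inl ⟨u, v, h, rfl, rfl⟩

lemma addLeaf_adj_last_cast {v : Fin n} :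
    (addLeaf G a).Adj (Fin.last n) v.castSucc ↔ v = a := by
  constructor
  · rintro (⟨u', v', h, hu, hv⟩ | ⟨-, h⟩ | ⟨h, -⟩)
    · exact absurd hu (Fin.castSucc_lt_last u').ne
    · exact Fin.castSucc_injective n h
    · exact absurd h.symm (Fin.castSucc_lt_last a).ne
  · rintro rfl
    exact Or.inr (Or.inl ⟨rfl, rfl⟩)

lemma addLeaf_adj_last' {y : Fin (n+1)} (h : (addLeaf G a).Adj (Fin.last n) y) :
    y = a.castSucc := by
  rcases h with ⟨u', v', h, hu, hv⟩ | ⟨-, h⟩ | ⟨h, -⟩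
  · exact absurd hu (Fin.castSucc_lt_last u').ne
  · exact h
  · exact absurd h.symm (Fin.castSucc_lt_last a).ne

lemma indep_preimage {s' : Set (Fin (n+1))} (h : IndepP (addLeaf G a) s') :
    IndepP G (Fin.castSucc ⁻¹' s') := fun x hx y hy hadj =>
  h _ hx _ hy (addLeaf_adj_cast.2 hadj)

lemma indep_image {s : Set (Fin n)} (h : IndepP G s) :
    IndepP (addLeaf G a) (Fin.castSucc '' s) := by
  rintro x ⟨u, hu, rfl⟩ y ⟨v, hv, rfl⟩ hadj
  exact h u hu v hv (addLeaf_adj_cast.1 hadj)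

lemma last_not_mem_image {s : Set (Fin n)} : Fin.last n ∉ Fin.castSucc '' s := by
  rintro ⟨u, -, hu⟩
  exact (Fin.castSucc_lt_last u).ne hu

lemma preimage_image (s : Set (Fin n)) :
    Fin.castSucc ⁻¹' (Fin.castSucc '' s) = s :=
  Set.preimage_image_eq s (Fin.castSucc_injective n)

lemma image_preimage_of_not_last {s' : Set (Fin (n+1))} (h : Fin.last n ∉ s') :
    Fin.castSucc '' (Fin.castSucc ⁻¹' s') = s' := by
  apply Set.image_preimage_eq_of_subset
  intro z hz
  have : z ≠ Fin.last n := fun hzl => h (hzl ▸ hz)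
  obtain ⟨w, rfl⟩ := Fin.exists_castSucc_eq.mpr this
  exact ⟨w, rfl⟩

lemma preimage_insert_last (t : Set (Fin (n+1))) :
    Fin.castSucc ⁻¹' (insert (Fin.last n) t) = Fin.castSucc ⁻¹' t := by
  ext w
  simp only [Set.mem_preimage, Set.mem_insert_iff, (Fin.castSucc_lt_last w).ne, false_or]

lemma indep_insert {s : Set (Fin n)} (h : IndepP G s) (ha : a ∉ s) :
    IndepP (addLeaf G a) (insert (Fin.last n) (Fin.castSucc '' s)) := by
  rintro x (rfl | ⟨u, hu, rfl⟩) y (rfl | ⟨v, hv, rfl⟩) hadj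
  · exact (addLeaf G a).loopless.irrefl _ hadj
  · exact ha ((addLeaf_adj_last_cast.1 hadj) ▸ hv)
  · exact ha ((addLeaf_adj_last_cast.1 hadj.symm) ▸ hu)
  · exact h u hu v hv (addLeaf_adj_cast.1 hadj)

noncomputable def eqvOut (G : SimpleGraph (Fin n)) (a : Fin n) (T : Set (Fin n) → Prop) :
    {s' : Set (Fin (n+1)) //
      (IndepP (addLeaf G a) s' ∧ T (Fin.castSucc ⁻¹' s')) ∧ Fin.last n ∉ s'} ≃
    {s : Set (Fin n) // IndepP G s ∧ T s} where
  toFun s' := ⟨Fin.castSucc ⁻¹' s'.1, indep_preimage s'.2.1.1, s'.2.1.2⟩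
  invFun s := ⟨Fin.castSucc '' s.1,
    ⟨⟨indep_image s.2.1, by rw [preimage_image]; exact s.2.2⟩, last_not_mem_image⟩⟩
  left_inv := fun ⟨s', h⟩ => Subtype.ext (image_preimage_of_not_last h.2)
  right_inv := fun ⟨s, h⟩ => Subtype.ext (preimage_image s)

noncomputable def eqvIn (G : SimpleGraph (Fin n)) (a : Fin n) (T : Set (Fin n) → Prop) :
    {s' : Set (Fin (n+1)) //
      (IndepP (addLeaf G a) s' ∧ T (Fin.castSucc ⁻¹' s')) ∧ Fin.last n ∈ s'} ≃
    {s : Set (Fin n) // (IndepP G s ∧ a ∉ s) ∧ T s} where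
  toFun s' := ⟨Fin.castSucc ⁻¹' s'.1,
    ⟨⟨indep_preimage s'.2.1.1,
      fun ha => s'.2.1.1 _ s'.2.2 _ ha (Or.inr (Or.inl ⟨rfl, rfl⟩))⟩, s'.2.1.2⟩⟩
  invFun s := ⟨insert (Fin.last n) (Fin.castSucc '' s.1),
    ⟨⟨indep_insert s.2.1.1 s.2.1.2,
      by rw [preimage_insert_last, preimage_image]; exact s.2.2⟩,
     Set.mem_insert _ _⟩⟩
  left_inv := by
    rintro ⟨s', ⟨h1, h2⟩, h3⟩
    apply Subtype.ext
    show insert (Fin.last n) (Fin.castSucc '' (Fin.castSucc ⁻¹' s')) = s'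
    ext z
    rcases eq_or_ne z (Fin.last n) with rfl | hz
    · simp [h3]
    · obtain ⟨w, rfl⟩ := Fin.exists_castSucc_eq.mpr hz
      simp only [Set.mem_insert_iff, (Fin.castSucc_lt_last w).ne, false_or]
      rw [(Fin.castSucc_injective n).mem_set_image]
      exact Iff.rfl
  right_inv := by
    rintro ⟨s, h⟩
    apply Subtype.ext
    show Fin.castSucc ⁻¹' (insert (Fin.last n) (Fin.castSucc '' s)) = s
    rw [preimage_insert_last, preimage_image]

namespace Rec
variable (G : SimpleGraph (Fin n)) (a : Fin n)

lemma Pc_addLeaf_last : Pc (addLeaf G a) (Fin.last n) = Pc G a + Qc G a := by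
  have e1 : {s' : Set (Fin (n+1)) // IndepP (addLeaf G a) s' ∧ Fin.last n ∉ s'} ≃
      {s : Set (Fin n) // IndepP G s} :=
    (Equiv.subtypeEquivRight (fun s' => by tauto)).trans
      ((eqvOut G a (fun _ => True)).trans (Equiv.subtypeEquivRight (fun s => by tauto)))
  rw [Pc, Nat.card_congr e1, ← numIndep_eq_card, numIndep_eq G a]

lemma Qc_addLeaf_last : Qc (addLeaf G a) (Fin.last n) = Pc G a := by
  have e1 : {s' : Set (Fin (n+1)) // IndepP (addLeaf G a) s' ∧ Fin.last n ∈ s'} ≃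
      {s : Set (Fin n) // IndepP G s ∧ a ∉ s} :=
    (Equiv.subtypeEquivRight (fun s' => by tauto)).trans
      ((eqvIn G a (fun _ => True)).trans (Equiv.subtypeEquivRight (fun s => by tauto)))
  rw [Qc, Nat.card_congr e1, Pc]

lemma Qc_addLeaf_cast : Qc (addLeaf G a) a.castSucc = Qc G a := by
  rw [Qc, card_split _ (fun s' => Fin.last n ∈ s')]
  have h0 : Nat.card {s' : Set (Fin (n+1)) //
      (IndepP (addLeaf G a) s' ∧ a.castSucc ∈ s') ∧ Fin.last n ∈ s'} = 0 := by
    have : IsEmpty {s' : Set (Fin (n+1)) //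
        (IndepP (addLeaf G a) s' ∧ a.castSucc ∈ s') ∧ Fin.last n ∈ s'} := by
      refine ⟨fun x => ?_⟩
      exact x.2.1.1 _ x.2.2 _ x.2.1.2 (Or.inr (Or.inl ⟨rfl, rfl⟩))
    exact Nat.card_of_isEmpty
  rw [h0, zero_add]
  have e1 : {s' : Set (Fin (n+1)) //
      (IndepP (addLeaf G a) s' ∧ a.castSucc ∈ s') ∧ Fin.last n ∉ s'} ≃
      {s : Set (Fin n) // IndepP G s ∧ a ∈ s} :=
    (Equiv.subtypeEquivRight (fun s' => by
      simp only [Set.mem_preimage, and_assoc])).trans (eqvOut G a (fun s => a ∈ s))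
  rw [Nat.card_congr e1, Qc]

lemma Pc_addLeaf_cast : Pc (addLeaf G a) a.castSucc = 2 * Pc G a := by
  rw [Pc, card_split _ (fun s' => Fin.last n ∈ s')]
  have e1 : {s' : Set (Fin (n+1)) //
      (IndepP (addLeaf G a) s' ∧ a.castSucc ∉ s') ∧ Fin.last n ∈ s'} ≃
      {s : Set (Fin n) // IndepP G s ∧ a ∉ s} :=
    (Equiv.subtypeEquivRight (fun s' => by
      simp only [Set.mem_preimage, and_assoc])).trans
      ((eqvIn G a (fun s => a ∉ s)).trans (Equiv.subtypeEquivRight (fun s => by tauto)))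
  have e2 : {s' : Set (Fin (n+1)) //
      (IndepP (addLeaf G a) s' ∧ a.castSucc ∉ s') ∧ Fin.last n ∉ s'} ≃
      {s : Set (Fin n) // IndepP G s ∧ a ∉ s} :=
    (Equiv.subtypeEquivRight (fun s' => by
      simp only [Set.mem_preimage, and_assoc])).trans (eqvOut G a (fun s => a ∉ s))
  rw [Nat.card_congr e1, Nat.card_congr e2, Pc]
  omega

end Rec


section Tree
variable (G : SimpleGraph (Fin n)) (a : Fin n)

/-- the hom from `G` into `addLeaf G a`. -/
def homCast : G →g addLeaf G a :=
  ⟨Fin.castSucc, fun h => Or.inl ⟨_, _, h, rfl, rfl⟩⟩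

lemma connected_addLeaf (h : G.Connected) : (addLeaf G a).Connected := by
  have hav : ∀ z : Fin (n+1), (addLeaf G a).Reachable a.castSucc z := by
    intro z
    rcases eq_or_ne z (Fin.last n) with rfl | hz
    · exact (SimpleGraph.Adj.reachable (Or.inr (Or.inr ⟨rfl, rfl⟩)))
    · obtain ⟨w, rfl⟩ := Fin.exists_castSucc_eq.mpr hz
      exact (h.preconnected a w).map (homCast G a)
  have : Nonempty (Fin (n+1)) := ⟨Fin.last n⟩
  exact SimpleGraph.Connected.mk fun u v => ((hav u).symm.trans (hav v))

lemma walk_pull {x y : Fin (n+1)} (p : (addLeaf G a).Walk x y)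
    (hp : ∀ w ∈ p.support, w ≠ Fin.last n) :
    ∃ (x' y' : Fin n) (q : G.Walk x' y'), x'.castSucc = x ∧ y'.castSucc = y ∧
      q.support.map Fin.castSucc = p.support ∧
      q.edges.map (Sym2.map Fin.castSucc) = p.edges := by
  induction p with
  | nil =>
    rename_i u
    have hx : u ≠ Fin.last n := hp _ (SimpleGraph.Walk.start_mem_support _)
    obtain ⟨x', rfl⟩ := Fin.exists_castSucc_eq.mpr hx
    exact ⟨x', x', SimpleGraph.Walk.nil, rfl, rfl, rfl, rfl⟩
  | cons hadj p ih =>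
    rename_i u v w
    have hu : u ≠ Fin.last n := hp _ (by simp [SimpleGraph.Walk.support_cons])
    have hsub : ∀ z ∈ p.support, z ≠ Fin.last n := fun z hz =>
      hp _ (by simp [SimpleGraph.Walk.support_cons, hz])
    obtain ⟨v', w', q, hv, hw, hs, he⟩ := ih hsub
    obtain ⟨u', rfl⟩ := Fin.exists_castSucc_eq.mpr hu
    subst hv
    have hadj' : G.Adj u' v' := addLeaf_adj_cast.1 hadj
    refine ⟨u', w', SimpleGraph.Walk.cons hadj' q, rfl, hw, ?_, ?_⟩
    · simp [SimpleGraph.Walk.support_cons, hs]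
    · simp [SimpleGraph.Walk.edges_cons, he]

lemma isAcyclic_addLeaf (h : G.IsAcyclic) : (addLeaf G a).IsAcyclic := by
  intro v c hc
  by_cases hl : Fin.last n ∈ c.support
  · have hd := hc.rotate hl
    set d := c.rotate _ hl with hdd
    clear_value d
    cases d with
    | nil => exact hd.not_of_nil
    | cons hadj t =>
      rename_i z
      obtain rfl : z = a.castSucc := addLeaf_adj_last' hadj
      rw [SimpleGraph.Walk.cons_isCycle_iff] at hd
      obtain ⟨hpath, hedge⟩ := hd
      have hrev : t.reverse.IsPath := hpath.reverse
      have hne : Fin.last n ≠ a.castSucc := (Fin.castSucc_lt_last a).ne'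
      obtain ⟨z2, hadj2, t2, ht2⟩ :=
        SimpleGraph.Walk.exists_eq_cons_of_ne hne t.reverse
      obtain rfl : z2 = a.castSucc := addLeaf_adj_last' hadj2
      rw [ht2] at hrev
      rw [SimpleGraph.Walk.cons_isPath_iff] at hrev
      have ht2nil := (SimpleGraph.Walk.isPath_iff_eq_nil (p := t2)).mp hrev.1
      have hlen : t.length = 1 := by
        have := congrArg SimpleGraph.Walk.length ht2
        rw [SimpleGraph.Walk.length_reverse, ht2nil] at this
        simpa using this
      have h3 := hc.three_le_length
      have hrot : (c.rotate _ hl).length = c.length := by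
        rw [SimpleGraph.Walk.rotate, SimpleGraph.Walk.length_append, add_comm,
          ← SimpleGraph.Walk.length_append, SimpleGraph.Walk.take_spec]
      rw [← hdd] at hrot
      rw [SimpleGraph.Walk.length_cons, hlen] at hrot
      omega
  · have hp : ∀ w ∈ c.support, w ≠ Fin.last n := fun w hw hww => hl (hww ▸ hw)
    obtain ⟨x', y', q, hx, hy, hs, he⟩ := walk_pull G a c hp
    have hxy : x' = y' := Fin.castSucc_injective n (hx.trans hy.symm)
    subst hxy
    apply h q
    rw [SimpleGraph.Walk.isCycle_def]
    refine ⟨⟨?_⟩, ?_, ?_⟩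
    · have := hc.isTrail.edges_nodup
      rw [← he] at this
      exact this.of_map _
    · intro hq
      have h3 := hc.three_le_length
      have hlen : q.support.length = c.support.length := by rw [← hs]; simp
      rw [SimpleGraph.Walk.length_support, SimpleGraph.Walk.length_support] at hlen
      subst hq
      rw [SimpleGraph.Walk.length_nil] at hlen
      omega
    · have := hc.2
      rw [← hs, ← List.map_tail] at this
      exact this.of_map _

lemma isTree_addLeaf (h : G.IsTree) : (addLeaf G a).IsTree :=
  ⟨connected_addLeaf G a h.isConnected, isAcyclic_addLeaf G a h.IsAcyclic⟩

end Tree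


section Base

lemma isTree_base : (⊥ : SimpleGraph (Fin 1)).IsTree := by
  constructor
  · have : Nonempty (Fin 1) := ⟨0⟩
    exact SimpleGraph.Connected.mk fun u v => by
      rw [Subsingleton.elim u v]
  · exact SimpleGraph.isAcyclic_bot

lemma Pc_base : Pc (⊥ : SimpleGraph (Fin 1)) 0 = 1 := by
  have e : {s : Set (Fin 1) // IndepP (⊥ : SimpleGraph (Fin 1)) s ∧ (0 : Fin 1) ∉ s} ≃ Unit := {
    toFun := fun _ => Unit.unit
    invFun := fun _ => ⟨∅, fun x hx => absurd hx (Set.notMem_empty x), Set.notMem_empty 0⟩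
    right_inv := fun _ => rfl
    left_inv := by
      rintro ⟨s, hs, h0⟩
      apply Subtype.ext
      show (∅ : Set (Fin 1)) = s
      ext z
      rw [Subsingleton.elim z 0]
      simp [h0] }
  rw [Pc, Nat.card_congr e, Nat.card_unique]

lemma Qc_base : Qc (⊥ : SimpleGraph (Fin 1)) 0 = 1 := by
  have e : {s : Set (Fin 1) // IndepP (⊥ : SimpleGraph (Fin 1)) s ∧ (0 : Fin 1) ∈ s} ≃ Unit := {
    toFun := fun _ => Unit.unit
    invFun := fun _ => ⟨Set.univ, fun x _ y _ h => h, Set.mem_univ 0⟩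
    right_inv := fun _ => rfl
    left_inv := by
      rintro ⟨s, hs, h0⟩
      apply Subtype.ext
      show (Set.univ : Set (Fin 1)) = s
      ext z
      rw [Subsingleton.elim z 0]
      simp [h0] }
  rw [Qc, Nat.card_congr e, Nat.card_unique]

end Base

section Build

/-- Build a tree from a list of operations (head = last applied).
`true` = extend: add a new vertex adjacent to the root, root moves to it.
`false` = leaf: add a new pendant leaf at the root, root stays. -/
def buildG : (l : List Bool) → SimpleGraph (Fin (l.length + 1)) × Fin (l.length + 1)
  | [] => ((⊥ : SimpleGraph (Fin 1)), 0)
  | b :: t => (addLeaf (buildG t).1 (buildG t).2,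
      if b then Fin.last (t.length + 1) else (buildG t).2.castSucc)

lemma buildG_isTree (l : List Bool) : (buildG l).1.IsTree := by
  induction l with
  | nil => exact isTree_base
  | cons b t ih => exact isTree_addLeaf _ _ ih

/-- state recursion for the ops list -/
def stOps : List Bool → ℕ × ℕ
  | [] => (1, 1)
  | true :: t => ((stOps t).1 + (stOps t).2, (stOps t).1)
  | false :: t => (2 * (stOps t).1, (stOps t).2)

lemma buildG_PQ (l : List Bool) :
    Pc (buildG l).1 (buildG l).2 = (stOps l).1 ∧
    Qc (buildG l).1 (buildG l).2 = (stOps l).2 := by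
  induction l with
  | nil => exact ⟨Pc_base, Qc_base⟩
  | cons b t ih =>
    cases b with
    | true =>
      constructor
      · show Pc (addLeaf (buildG t).1 (buildG t).2) (Fin.last (t.length + 1))
            = (stOps t).1 + (stOps t).2
        rw [Rec.Pc_addLeaf_last, ih.1, ih.2]
      · show Qc (addLeaf (buildG t).1 (buildG t).2) (Fin.last (t.length + 1))
            = (stOps t).1
        rw [Rec.Qc_addLeaf_last, ih.1]
    | false =>
      constructor
      · show Pc (addLeaf (buildG t).1 (buildG t).2) ((buildG t).2.castSucc)
            = 2 * (stOps t).1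
        rw [Rec.Pc_addLeaf_cast, ih.1]
      · show Qc (addLeaf (buildG t).1 (buildG t).2) ((buildG t).2.castSucc)
            = (stOps t).2
        rw [Rec.Qc_addLeaf_cast, ih.2]

lemma numIndep_buildG (l : List Bool) :
    numIndep (buildG l).1 = (stOps l).1 + (stOps l).2 := by
  rw [numIndep_eq (buildG l).1 (buildG l).2, (buildG_PQ l).1, (buildG_PQ l).2]

/-- ops encoding of a bit string -/
def opsOf : List Bool → List Bool
  | [] => [true]
  | b :: t => if b then false :: true :: opsOf t else true :: opsOf t

lemma stOps_opsOf (bl : List Bool) : stOps (opsOf bl) = stB bl := by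
  induction bl with
  | nil => rfl
  | cons b t ih =>
    cases b with
    | true =>
      simp only [opsOf, if_true, stOps, stB, ih]
    | false =>
      simp only [opsOf, if_false, stOps, stB, ih]
      norm_num
      simp only [stOps, ih]

lemma stOps_replicate (m : ℕ) (l : List Bool) :
    stOps (List.replicate m false ++ l) = (2 ^ m * (stOps l).1, (stOps l).2) := by
  induction m with
  | zero => simp [stOps]
  | succ k ih =>
    rw [List.replicate_succ, List.cons_append]
    show stOps (false :: _) = _
    rw [show stOps (false :: (List.replicate k false ++ l))
        = (2 * (stOps (List.replicate k false ++ l)).1,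
           (stOps (List.replicate k false ++ l)).2) from rfl, ih]
    simp [pow_succ]
    ring

/-- full op list realizing `val bl` -/
def fullOps (bl : List Bool) : List Bool :=
  true :: (List.replicate (2 * bl.length + 1) false ++ opsOf bl)

lemma numIndep_fullOps (bl : List Bool) :
    numIndep (buildG (fullOps bl)).1 = val bl := by
  rw [numIndep_buildG]
  show (stOps (true :: _)).1 + (stOps (true :: _)).2 = _
  rw [show ∀ t, stOps (true :: t) = ((stOps t).1 + (stOps t).2, (stOps t).1) from fun _ => rfl]
  rw [stOps_replicate, stOps_opsOf, val]
  simp only []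
  rw [pow_succ]
  ring

lemma val_mem_Itree (bl : List Bool) :
    ∃ (k : ℕ) (T : SimpleGraph (Fin k)), T.IsTree ∧ numIndep T = val bl :=
  ⟨_, (buildG (fullOps bl)).1, buildG_isTree _, numIndep_fullOps bl⟩

end Build


lemma mem_Itree (bl : List Bool) : val bl ∈ Itree := val_mem_Itree bl

lemma c_le_quarter :
    Real.log 2 / (4 * Real.log (1 + Real.sqrt 2)) ≤ 1 / 4 := by
  have hs : (1:ℝ) ≤ Real.sqrt 2 := by
    nlinarith [Real.sq_sqrt (by norm_num : (0:ℝ) ≤ 2), Real.sqrt_nonneg 2]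
  have hL : 0 < Real.log (1 + Real.sqrt 2) := Real.log_pos (by linarith)
  have hle : Real.log 2 ≤ Real.log (1 + Real.sqrt 2) :=
    Real.log_le_log (by norm_num) (by linarith)
  rw [div_le_div_iff₀ (by linarith) (by norm_num)]
  nlinarith

theorem main : ∀ ε : ℝ, 0 < ε → ∃ N₀ : ℕ, ∀ N : ℕ, N₀ ≤ N →
    (N : ℝ) ^ (Real.log 2 / (4 * Real.log (1 + Real.sqrt 2)) - ε) ≤
      ((Itree ∩ Set.Icc 1 N).ncard : ℝ) := by
  intro ε hε
  set M : ℕ := max 8 ⌈2 / ε⌉₊ with hM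
  refine ⟨2 ^ M, fun N hN => ?_⟩
  have hM8 : 8 ≤ M := le_max_left _ _
  have hN8 : 2 ^ 8 ≤ N := le_trans (Nat.pow_le_pow_right (by norm_num) hM8) hN
  have hN1 : 1 ≤ N := le_trans (by norm_num) hN8
  set k : ℕ := Nat.log 2 N with hk
  have hk8 : 8 ≤ k := by
    calc 8 = Nat.log 2 (2 ^ 8) := (Nat.log_pow (by norm_num) 8).symm
    _ ≤ k := Nat.log_mono_right hN8
  set n : ℕ := (k - 4) / 4 with hn
  -- Claim A
  have hA : 2 ^ (4 * n + 4) ≤ N := by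
    have h1 : 4 * n ≤ k - 4 := by
      rw [hn, mul_comm]
      exact Nat.div_mul_le_self _ _
    have h2 : 4 * n + 4 ≤ k := by omega
    calc 2 ^ (4 * n + 4) ≤ 2 ^ k := Nat.pow_le_pow_right (by norm_num) h2
    _ ≤ N := Nat.pow_log_le_self 2 (by omega)
  -- Claim B
  have hB : k ≤ 4 * n + 7 := by
    have := Nat.div_add_mod (k - 4) 4
    have := Nat.mod_lt (k - 4) (show 0 < 4 by norm_num)
    omega
  -- the finset of realizable values
  classical
  have hofn : ∀ f : Fin n → Bool, (List.ofFn f).length = n := fun f => List.length_ofFn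
  set F : Finset ℕ :=
    Finset.image (fun f : Fin n → Bool => val (List.ofFn f)) Finset.univ with hF
  have hcard : F.card = 2 ^ n := by
    rw [hF, Finset.card_image_of_injective _ ?inj, Finset.card_univ]
    · simp [Fintype.card_fun]
    case inj =>
      intro f g hfg
      have := val_inj _ _ (by rw [hofn, hofn]) hfg
      exact List.ofFn_injective this
  have hsub : ↑F ⊆ Itree ∩ Set.Icc 1 N := by
    intro m hm
    simp only [hF, Finset.coe_image, Set.mem_image, Finset.mem_coe] at hm
    obtain ⟨f, -, rfl⟩ := hm
    refine ⟨mem_Itree _, one_le_val _, ?_⟩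
    calc val (List.ofFn f) ≤ 2 ^ (4 * (List.ofFn f).length + 4) := val_le _
    _ = 2 ^ (4 * n + 4) := by rw [hofn]
    _ ≤ N := hA
  have hfin : (Itree ∩ Set.Icc 1 N).Finite :=
    (Set.finite_Icc 1 N).subset Set.inter_subset_right |>.subset (fun x hx => hx)
  have hcard2 : 2 ^ n ≤ (Itree ∩ Set.Icc 1 N).ncard := by
    rw [← hcard, ← Set.ncard_coe_finset]
    exact Set.ncard_le_ncard hsub hfin
  -- real estimates
  have hNpos : (0:ℝ) < (N:ℝ) := by exact_mod_cast Nat.pos_of_ne_zero (by omega)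
  have hN1R : (1:ℝ) ≤ (N:ℝ) := by exact_mod_cast hN1
  have hl2 : (0:ℝ) < Real.log 2 := Real.log_pos (by norm_num)
  have hlogN0 : (0:ℝ) ≤ Real.log N := Real.log_nonneg hN1R
  -- log N < (4n+8) log 2
  have hup : Real.log N < ((4 * n + 8 : ℕ) : ℝ) * Real.log 2 := by
    have h1 : N < 2 ^ (k + 1) := Nat.lt_pow_succ_log_self (by norm_num) N
    have h2 : (2:ℕ) ^ (k + 1) ≤ 2 ^ (4 * n + 8) := Nat.pow_le_pow_right (by norm_num) (by omega)
    have h3 : (N:ℝ) < ((2:ℝ)) ^ (4 * n + 8 : ℕ) := by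
      have : N < 2 ^ (4 * n + 8) := lt_of_lt_of_le h1 h2
      exact_mod_cast this
    calc Real.log N < Real.log ((2:ℝ) ^ (4 * n + 8 : ℕ)) :=
          Real.log_lt_log hNpos h3
    _ = ((4 * n + 8 : ℕ) : ℝ) * Real.log 2 := by rw [Real.log_pow]
  -- ε log N ≥ 2 log 2
  have hdown : 2 * Real.log 2 ≤ ε * Real.log N := by
    have h1 : (2:ℕ) ^ M ≤ N := hN
    have h2 : ((2:ℝ)) ^ (M:ℕ) ≤ (N:ℝ) := by exact_mod_cast h1
    have h3 : (M:ℝ) * Real.log 2 ≤ Real.log N := by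
      calc (M:ℝ) * Real.log 2 = Real.log ((2:ℝ) ^ (M:ℕ)) := by rw [Real.log_pow]
      _ ≤ Real.log N := Real.log_le_log (by positivity) h2
    have h4 : (2 / ε : ℝ) ≤ (M:ℝ) := by
      calc (2 / ε : ℝ) ≤ (⌈2/ε⌉₊ : ℝ) := Nat.le_ceil _
      _ ≤ (M:ℝ) := by exact_mod_cast le_max_right 8 ⌈2/ε⌉₊
    have h5 : (2/ε) * Real.log 2 ≤ (M:ℝ) * Real.log 2 :=
      mul_le_mul_of_nonneg_right h4 hl2.le
    have h6 : ε * ((2/ε) * Real.log 2) = 2 * Real.log 2 := by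
      field_simp
    nlinarith
  -- main exponent inequality
  have hexp : (N:ℝ) ^ (Real.log 2 / (4 * Real.log (1 + Real.sqrt 2)) - ε)
      ≤ (2:ℝ) ^ (n:ℕ) := by
    have step1 : (N:ℝ) ^ (Real.log 2 / (4 * Real.log (1 + Real.sqrt 2)) - ε)
        ≤ (N:ℝ) ^ ((1/4 : ℝ) - ε) :=
      Real.rpow_le_rpow_of_exponent_le hN1R (by linarith [c_le_quarter])
    have step2 : (N:ℝ) ^ ((1/4:ℝ) - ε) ≤ (2:ℝ) ^ (n:ℕ) := by
      rw [← Real.rpow_natCast (2:ℝ) n, Real.rpow_def_of_pos hNpos,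
        Real.rpow_def_of_pos (by norm_num : (0:ℝ) < 2)]
      apply Real.exp_le_exp.2
      push_cast at hup ⊢
      nlinarith
    exact step1.trans step2
  calc (N:ℝ) ^ (Real.log 2 / (4 * Real.log (1 + Real.sqrt 2)) - ε)
      ≤ (2:ℝ) ^ (n:ℕ) := hexp
  _ ≤ ((Itree ∩ Set.Icc 1 N).ncard : ℝ) := by
      have : ((2:ℕ) ^ n : ℝ) ≤ ((Itree ∩ Set.Icc 1 N).ncard : ℝ) := by
        exact_mod_cast hcard2
      push_cast at this ⊢
      linarith

end ItreeProof



/-- The lower growth exponent of `Itree` is at least `log 2 / (4 log (1+√2))`: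
for every `ε > 0`, for all sufficiently large `N`, the number of integers in
`{1,…,N}` realizable as the number of independent sets of a tree is at least
`N ^ (log 2 / (4 log (1+√2)) - ε)`. -/
theorem itree_lower_growth_exponent :
    ∀ ε : ℝ, 0 < ε → ∃ N₀ : ℕ, ∀ N : ℕ, N₀ ≤ N →
      (N : ℝ) ^ (Real.log 2 / (4 * Real.log (1 + Real.sqrt 2)) - ε) ≤
        ((Itree ∩ Set.Icc 1 N).ncard : ℝ) := by
  exact ItreeProof.main
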